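/- arXiv:1809.07913 — 2 statements merged into one kernel-verified Lean document; each statement's English description precedes it below -/
import Mathlib

section
/- Let n ≥ 3 and let α_n be an optimal set of n-means for P such that α_n ∩ J_j ≠ ∅ for all j ∈ {1,2,3}, α_n contains no point of (1/5,2/5) ∪ (3/5,4/5), and for each j the Voronoi region of any point of α_n ∩ J_j contains no point of J_i for i ≠ j. Set β_j = α_n ∩ J_j and n_j = card β_j. Then for each j, the preimage S_j⁻¹(β_j) is an optimal set of n_j-means for P, and V_n = (1/75)(V_{n_1} + V_{n_2} + V_{n_3}). -/
open MeasureTheory Filter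
open scoped ENNReal

noncomputable section

/-- The three contractive similarities `S j x = x/5 + 2 j/5` (indexing `j = 0,1,2`
corresponds to the paper's `j = 1,2,3`). -/
def S (j : Fin 3) : ℝ → ℝ := fun x => x / 5 + 2 * (j : ℝ) / 5

/-- For a word `σ ∈ {1,2,3}^k`, the composition `S_σ = S_{σ 0} ∘ ⋯ ∘ S_{σ (k-1)}`. -/
def Sword {k : ℕ} (σ : Fin k → Fin 3) : ℝ → ℝ :=
  (List.ofFn fun i => S (σ i)).foldr (· ∘ ·) id

/-- The basic interval `J j = S j ([0,1])`. -/
def J (j : Fin 3) : Set ℝ := S j '' Set.Icc 0 1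

/-- The interval `J_σ = S_σ([0,1])`. -/
def Jword {k : ℕ} (σ : Fin k → Fin 3) : Set ℝ := Sword σ '' Set.Icc 0 1

/-- The distortion error `V(P; α) = ∫ min_{a ∈ α} (x - a)^2 dP(x)`. -/
def distortion (P : Measure ℝ) (α : Set ℝ) : ℝ :=
  ∫ x, (⨅ a : α, (x - (a : ℝ)) ^ 2) ∂P

/-- The `n`-th quantization error
`V_n = inf { V(P; α) : α ⊂ ℝ finite, 1 ≤ card α ≤ n }`. -/
def quantErr (P : Measure ℝ) (n : ℕ) : ℝ :=
  sInf {e | ∃ α : Set ℝ, α.Finite ∧ α.Nonempty ∧ α.ncard ≤ n ∧ distortion P α = e}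

/-- The self-similarity equation `P = (1/3)(P∘S₁⁻¹ + P∘S₂⁻¹ + P∘S₃⁻¹)`
characterizing the standard triadic Cantor distribution. -/
def IsTriadicCantor (P : Measure ℝ) : Prop :=
  P = (3 : ℝ≥0∞)⁻¹ • (P.map (S 0) + P.map (S 1) + P.map (S 2))

namespace Aux13
open Set

lemma S_cont (j : Fin 3) : Continuous (S j) := by
  unfold S; fun_prop

lemma S_meas (j : Fin 3) : Measurable (S j) := (S_cont j).measurable

lemma S_inj (j : Fin 3) : Function.Injective (S j) := by
  intro x y h; simp only [S] at h; linarith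

lemma S_surj (j : Fin 3) : Function.Surjective (S j) := by
  intro y; exact ⟨5 * y - 2 * (j : ℝ), by simp [S]; ring⟩

lemma J_subset (j : Fin 3) : J j ⊆ Set.Icc 0 1 := by
  rintro x ⟨y, hy, rfl⟩
  have h1 : (j : ℝ) ≤ 2 := by
    have := j.2
    have : (j : ℕ) ≤ 2 := by omega
    exact_mod_cast this
  have h0 : (0:ℝ) ≤ (j : ℝ) := Nat.cast_nonneg _
  constructor <;> simp only [S] <;> [nlinarith [hy.1]; nlinarith [hy.2]]

lemma J_eq (j : Fin 3) : J j = Set.Icc (2*(j:ℝ)/5) (2*(j:ℝ)/5 + 1/5) := by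
  ext x
  constructor
  · rintro ⟨y, hy, rfl⟩
    constructor <;> simp only [S] <;> [linarith [hy.1]; linarith [hy.2]]
  · rintro ⟨h1, h2⟩
    exact ⟨5*x - 2*(j:ℝ), ⟨by linarith, by linarith⟩, by simp [S]; ring⟩

/-- Bridge between subtype `iInf` and `Finset.inf'`. -/
lemma iInf_eq_inf' {β : Set ℝ} (hβ : β.Finite) (hne : β.Nonempty) (g : ℝ → ℝ)
    (hg : ∀ a, 0 ≤ g a) :
    (⨅ a : β, g a) = hβ.toFinset.inf' (by simpa using hne) g := by
  haveI := hβ.to_subtype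
  haveI : Nonempty ↥β := hne.to_subtype
  apply le_antisymm
  · obtain ⟨a, ha, he⟩ := Finset.exists_mem_eq_inf' (by simpa using hne : hβ.toFinset.Nonempty) g
    rw [he]
    exact ciInf_le (Set.finite_range _).bddBelow (⟨a, by simpa using ha⟩ : ↥β)
  · exact le_ciInf fun a => Finset.inf'_le g (by simpa using a.2)

lemma inf'_nonneg {s : Finset ℝ} (hs : s.Nonempty) (g : ℝ → ℝ) (hg : ∀ a, 0 ≤ g a) :
    0 ≤ s.inf' hs g :=
  Finset.le_inf' hs g fun a _ => hg a

lemma inf'_subset {s t : Finset ℝ} (h : s ⊆ t) (hs : s.Nonempty) (f : ℝ → ℝ) :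
    t.inf' (hs.mono h) f ≤ s.inf' hs f :=
  Finset.le_inf' _ _ fun b hb => Finset.inf'_le f (h hb)

lemma continuous_inf' (s : Finset ℝ) (hs : s.Nonempty) (F : ℝ → ℝ → ℝ)
    (hF : ∀ a, Continuous fun x => F x a) :
    Continuous fun x => s.inf' hs fun a => F x a := by
  induction hs using Finset.Nonempty.cons_induction with
  | singleton a =>
      simp only [Finset.inf'_singleton]
      exact hF a
  | cons a s ha hs ih =>
      simp only [Finset.inf'_cons (H := hs)]
      exact (hF a).min ih

lemma inf'_sq_eq (s : Finset ℝ) (hs : s.Nonempty) (x : ℝ) :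
    (s.inf' hs fun a => (x - a) ^ 2) = (s.inf' hs fun a => |x - a|) ^ 2 := by
  obtain ⟨a, ha, he⟩ := Finset.exists_mem_eq_inf' hs fun a => |x - a|
  obtain ⟨b, hb, heb⟩ := Finset.exists_mem_eq_inf' hs fun a => (x - a) ^ 2
  rw [he, heb]
  have h1 : |x - a| ≤ |x - b| := he ▸ Finset.inf'_le _ hb
  have h2 : (x - b) ^ 2 ≤ (x - a) ^ 2 := heb ▸ Finset.inf'_le _ ha
  have := sq_abs (x - a); have := sq_abs (x - b)
  nlinarith [abs_nonneg (x - a), abs_nonneg (x - b)]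

lemma inf'_mul_const (s : Finset ℝ) (hs : s.Nonempty) (f : ℝ → ℝ) {c : ℝ} (hc : 0 ≤ c) :
    (s.inf' hs fun a => f a * c) = s.inf' hs f * c := by
  obtain ⟨a, ha, he⟩ := Finset.exists_mem_eq_inf' hs f
  obtain ⟨b, hb, heb⟩ := Finset.exists_mem_eq_inf' hs fun a => f a * c
  have h1 : f a ≤ f b := he ▸ Finset.inf'_le _ hb
  have h2 : f b * c ≤ f a * c := heb ▸ Finset.inf'_le _ ha
  rw [he, heb]
  nlinarith

-- add j_le
lemma j_le (j : Fin 3) : (j : ℝ) ≤ 2 := by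
  have : (j : ℕ) ≤ 2 := by omega
  exact_mod_cast this



lemma measure_eq {P : Measure ℝ}
    (hP : P = (3 : ℝ≥0∞)⁻¹ • (P.map (S 0) + P.map (S 1) + P.map (S 2)))
    (A : Set ℝ) (hA : MeasurableSet A) :
    P A = 3⁻¹ * (P (S 0 ⁻¹' A) + P (S 1 ⁻¹' A) + P (S 2 ⁻¹' A)) := by
  conv_lhs => rw [hP]
  simp [Measure.add_apply, Measure.map_apply (S_meas _) hA, mul_add]

lemma ennreal_third (g : ℝ≥0∞) : (3:ℝ≥0∞)⁻¹ * (g + g + g) = g := by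
  rw [show g + g + g = 3 * g by ring, ← mul_assoc,
    ENNReal.inv_mul_cancel (by norm_num) (by norm_num), one_mul]

lemma step_lemma {P : Measure ℝ}
    (hP : P = (3 : ℝ≥0∞)⁻¹ • (P.map (S 0) + P.map (S 1) + P.map (S 2)))
    (t : ℝ) (ht : 0 < t) :
    P (Icc (-t) (1+t))ᶜ ≤ P (Icc (-(5*t)) (1+5*t))ᶜ := by
  have hsub : ∀ j : Fin 3, S j ⁻¹' (Icc (-t) (1+t))ᶜ ⊆ (Icc (-(5*t)) (1+5*t))ᶜ := by
    intro j
    rw [Set.preimage_compl, Set.compl_subset_compl]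
    intro x hx
    have h0 : (0:ℝ) ≤ (j : ℝ) := Nat.cast_nonneg _
    have h2 := j_le j
    simp only [Set.mem_preimage, S, Set.mem_Icc] at hx ⊢
    constructor <;> [linarith [hx.1, hx.2]; linarith [hx.1, hx.2]]
  rw [measure_eq hP _ (measurableSet_Icc.compl)]
  calc 3⁻¹ * (P (S 0 ⁻¹' (Icc (-t) (1+t))ᶜ) + P (S 1 ⁻¹' (Icc (-t) (1+t))ᶜ)
        + P (S 2 ⁻¹' (Icc (-t) (1+t))ᶜ))
      ≤ 3⁻¹ * (P (Icc (-(5*t)) (1+5*t))ᶜ + P (Icc (-(5*t)) (1+5*t))ᶜ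
        + P (Icc (-(5*t)) (1+5*t))ᶜ) := by
        gcongr <;> exact hsub _
    _ = _ := ennreal_third _

lemma supp_t {P : Measure ℝ} [IsProbabilityMeasure P]
    (hP : P = (3 : ℝ≥0∞)⁻¹ • (P.map (S 0) + P.map (S 1) + P.map (S 2)))
    (t : ℝ) (ht : 0 < t) : P (Icc (-t) (1+t))ᶜ = 0 := by
  have iter : ∀ k : ℕ, P (Icc (-t) (1+t))ᶜ ≤ P (Icc (-(5^k*t)) (1+5^k*t))ᶜ := by
    intro k
    induction k with
    | zero => simp
    | succ k ih =>
        refine ih.trans ?_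
        have := step_lemma hP (5^k*t) (by positivity)
        rw [show (5:ℝ)^(k+1)*t = 5*(5^k*t) by ring]
        exact this
  have anti : Antitone fun k : ℕ => (Icc (-(5^k*t)) (1+5^k*t))ᶜ := by
    intro k l hkl
    apply Set.compl_subset_compl.2
    apply Icc_subset_Icc
    · have : (5:ℝ)^k ≤ 5^l := pow_le_pow_right₀ (by norm_num) hkl
      nlinarith
    · have : (5:ℝ)^k ≤ 5^l := pow_le_pow_right₀ (by norm_num) hkl
      nlinarith
  have hiInter : ⋂ k : ℕ, (Icc (-(5^k*t)) (1+5^k*t))ᶜ = ∅ := by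
    ext x
    simp only [Set.mem_iInter, Set.mem_compl_iff, Set.mem_Icc, Set.mem_empty_iff_false,
      iff_false, not_forall, not_not]
    obtain ⟨k, hk⟩ := pow_unbounded_of_one_lt (|x|/t) (by norm_num : (1:ℝ) < 5)
    have hxk : |x| < 5^k * t := by
      rw [div_lt_iff₀ ht] at hk; linarith
    have h1 := abs_le.1 hxk.le
    exact ⟨k, by linarith [h1.1], by linarith [h1.2]⟩
  have htend := tendsto_measure_iInter_atTop
    (μ := P) (s := fun k : ℕ => (Icc (-(5^k*t)) (1+5^k*t))ᶜ)
    (fun k => (measurableSet_Icc.compl).nullMeasurableSet) anti ⟨0, measure_ne_top _ _⟩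
  rw [hiInter] at htend
  simp only [measure_empty] at htend
  have := ge_of_tendsto htend (Filter.Eventually.of_forall iter)
  simpa using this

lemma supp_unit {P : Measure ℝ} [IsProbabilityMeasure P]
    (hP : P = (3 : ℝ≥0∞)⁻¹ • (P.map (S 0) + P.map (S 1) + P.map (S 2))) :
    P (Icc (0:ℝ) 1)ᶜ = 0 := by
  have hsub : (Icc (0:ℝ) 1)ᶜ ⊆ ⋃ n : ℕ, (Icc (-(1/(n+1):ℝ)) (1+1/(n+1)))ᶜ := by
    intro x hx
    simp only [Set.mem_compl_iff, Set.mem_Icc, not_and_or, not_le] at hx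
    simp only [Set.mem_iUnion, Set.mem_compl_iff, Set.mem_Icc, not_and_or, not_le]
    rcases hx with h | h
    · obtain ⟨n, hn⟩ := exists_nat_one_div_lt (show (0:ℝ) < -x by linarith)
      exact ⟨n, Or.inl (by linarith)⟩
    · obtain ⟨n, hn⟩ := exists_nat_one_div_lt (show (0:ℝ) < x - 1 by linarith)
      exact ⟨n, Or.inr (by linarith)⟩
  refine le_antisymm ?_ (zero_le)
  calc P (Icc (0:ℝ) 1)ᶜ ≤ P (⋃ n : ℕ, (Icc (-(1/(n+1):ℝ)) (1+1/(n+1)))ᶜ) := measure_mono hsub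
    _ = 0 := measure_iUnion_null fun n => supp_t hP _ (by positivity)

lemma ae_unit {P : Measure ℝ} [IsProbabilityMeasure P]
    (hP : P = (3 : ℝ≥0∞)⁻¹ • (P.map (S 0) + P.map (S 1) + P.map (S 2))) :
    ∀ᵐ x ∂P, x ∈ Icc (0:ℝ) 1 := by
  rw [ae_iff]
  exact supp_unit hP

lemma integrable_of_cont {P : Measure ℝ} [IsProbabilityMeasure P]
    (hP : P = (3 : ℝ≥0∞)⁻¹ • (P.map (S 0) + P.map (S 1) + P.map (S 2)))
    (f : ℝ → ℝ) (hf : Continuous f) : Integrable f P := by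
  obtain ⟨C, hC⟩ := (isCompact_Icc (a := (0:ℝ)) (b := 1)).exists_bound_of_continuousOn
    hf.continuousOn
  refine Integrable.mono' (integrable_const C) hf.aestronglyMeasurable ?_
  filter_upwards [ae_unit hP] with x hx
  exact hC x hx




lemma integral_decomp {P : Measure ℝ} [IsProbabilityMeasure P]
    (hP : P = (3 : ℝ≥0∞)⁻¹ • (P.map (S 0) + P.map (S 1) + P.map (S 2)))
    (f : ℝ → ℝ) (hf : Continuous f) :
    ∫ x, f x ∂P = (1/3) * ((∫ y, f (S 0 y) ∂P) + (∫ y, f (S 1 y) ∂P) + ∫ y, f (S 2 y) ∂P) := by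
  have hint : ∀ j : Fin 3, Integrable f (P.map (S j)) := fun j =>
    (integrable_map_measure hf.aestronglyMeasurable (S_meas j).aemeasurable).2
      (integrable_of_cont hP (f ∘ S j) (hf.comp (S_cont j)))
  have hmap : ∀ j : Fin 3, ∫ x, f x ∂(P.map (S j)) = ∫ y, f (S j y) ∂P := fun j =>
    integral_map (S_meas j).aemeasurable hf.aestronglyMeasurable
  conv_lhs => rw [hP]
  rw [integral_smul_measure, integral_add_measure ((hint 0).add_measure (hint 1)) (hint 2),
    integral_add_measure (hint 0) (hint 1), hmap 0, hmap 1, hmap 2]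
  have : ((3:ℝ≥0∞)⁻¹).toReal = 1/3 := by
    rw [ENNReal.toReal_inv]; norm_num
  rw [this, smul_eq_mul]

lemma distortion_nonneg (P : Measure ℝ) (β : Set ℝ) : 0 ≤ distortion P β :=
  integral_nonneg fun x => Real.iInf_nonneg fun a => sq_nonneg _

lemma quantErr_bddBelow (P : Measure ℝ) (n : ℕ) :
    BddBelow {e | ∃ α : Set ℝ, α.Finite ∧ α.Nonempty ∧ α.ncard ≤ n ∧ distortion P α = e} :=
  ⟨0, by rintro e ⟨β, -, -, -, rfl⟩; exact distortion_nonneg P β⟩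

lemma quantErr_le (P : Measure ℝ) {β : Set ℝ} {m : ℕ} (h1 : β.Finite) (h2 : β.Nonempty)
    (h3 : β.ncard ≤ m) : quantErr P m ≤ distortion P β :=
  csInf_le (quantErr_bddBelow P m) ⟨β, h1, h2, h3, rfl⟩

lemma quantErr_set_nonempty (P : Measure ℝ) {m : ℕ} (hm : 1 ≤ m) :
    {e | ∃ α : Set ℝ, α.Finite ∧ α.Nonempty ∧ α.ncard ≤ m ∧ distortion P α = e}.Nonempty :=
  ⟨distortion P {0}, {0}, Set.finite_singleton 0, Set.singleton_nonempty 0,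
    by simpa using hm, rfl⟩

lemma exists_near (P : Measure ℝ) {m : ℕ} (hm : 1 ≤ m) {c : ℝ} (hc : quantErr P m < c) :
    ∃ β : Set ℝ, β.Finite ∧ β.Nonempty ∧ β.ncard ≤ m ∧ distortion P β < c := by
  obtain ⟨e, ⟨β, h1, h2, h3, rfl⟩, he⟩ := exists_lt_of_csInf_lt (quantErr_set_nonempty P hm) hc
  exact ⟨β, h1, h2, h3, he⟩

lemma quantErr_nonneg (P : Measure ℝ) {m : ℕ} (hm : 1 ≤ m) : 0 ≤ quantErr P m :=
  le_csInf (quantErr_set_nonempty P hm) (by rintro e ⟨β, -, -, -, rfl⟩; exact distortion_nonneg P β)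

/-- clamp to [0,1] -/
def clamp (a : ℝ) : ℝ := max 0 (min 1 a)

lemma clamp_sq_le {x a : ℝ} (hx : x ∈ Icc (0:ℝ) 1) : (x - clamp a)^2 ≤ (x - a)^2 := by
  obtain ⟨hx0, hx1⟩ := hx
  unfold clamp
  rcases le_total a 0 with h | h
  · rw [min_eq_right (by linarith), max_eq_left (by linarith)]
    nlinarith
  · rcases le_total 1 a with h' | h'
    · rw [min_eq_left h', max_eq_right (by norm_num)]
      nlinarith
    · rw [min_eq_right h', max_eq_right h]

lemma clamp_sq_lt {x a : ℝ} (hx : x ∈ Icc (0:ℝ) 1) (ha : a ∉ Icc (0:ℝ) 1) :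
    (x - clamp a)^2 < (x - a)^2 := by
  obtain ⟨hx0, hx1⟩ := hx
  simp only [Set.mem_Icc, not_and_or, not_le] at ha
  unfold clamp
  rcases ha with h | h
  · rw [min_eq_right (by linarith), max_eq_left (by linarith)]
    nlinarith
  · rw [min_eq_left (by linarith), max_eq_right (by norm_num)]
    nlinarith


lemma distortion_eq (P : Measure ℝ) {γ : Set ℝ} (hγf : γ.Finite) (hγne : γ.Nonempty) :
    distortion P γ
      = ∫ x, (hγf.toFinset.inf' (by simpa using hγne) fun a => (x - a) ^ 2) ∂P := by
  unfold distortion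
  refine integral_congr_ae (Filter.Eventually.of_forall fun x => ?_)
  exact iInf_eq_inf' hγf hγne _ (fun a => sq_nonneg _)

lemma scale_pointwise {j : Fin 3} {γ : Set ℝ} (hγf : γ.Finite) (hγne : γ.Nonempty)
    (hSf : (S j '' γ).Finite) (hSne : (S j '' γ).Nonempty) (y : ℝ) :
    (hSf.toFinset.inf' (by simpa using hSne) fun a => (S j y - a) ^ 2)
      = (hγf.toFinset.inf' (by simpa using hγne) fun z => (y - z) ^ 2) * (1 / 25) := by
  have hfs : hSf.toFinset = hγf.toFinset.image (S j) := by ext a; simp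
  have h1 : (hSf.toFinset.inf' (by simpa using hSne) fun a => (S j y - a) ^ 2)
      = (hγf.toFinset.image (S j)).inf' (by simp; simpa using hγne) fun a => (S j y - a) ^ 2 := by
    simp only [hfs]
  rw [h1, Finset.inf'_image]
  have h2 : ∀ z ∈ hγf.toFinset, ((fun a => (S j y - a) ^ 2) ∘ S j) z = (y - z) ^ 2 * (1 / 25) := by
    intro z _
    simp only [Function.comp, S]
    ring
  have h3 := Finset.inf'_congr (s := hγf.toFinset) (H := by simpa using hγne)
    (f := (fun a => (S j y - a) ^ 2) ∘ S j) rfl h2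
  rw [h3]
  exact inf'_mul_const _ _ _ (by norm_num)

lemma scale_integral {P : Measure ℝ} [IsProbabilityMeasure P]
    (hP : P = (3 : ℝ≥0∞)⁻¹ • (P.map (S 0) + P.map (S 1) + P.map (S 2)))
    (j : Fin 3) {γ : Set ℝ} (hγf : γ.Finite) (hγne : γ.Nonempty)
    (hSf : (S j '' γ).Finite) (hSne : (S j '' γ).Nonempty) :
    ∫ y, (hSf.toFinset.inf' (by simpa using hSne) fun a => (S j y - a) ^ 2) ∂P
      = (1 / 25) * distortion P γ := by
  have : ∀ y : ℝ, (hSf.toFinset.inf' (by simpa using hSne) fun a => (S j y - a) ^ 2)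
      = (hγf.toFinset.inf' (by simpa using hγne) fun z => (y - z) ^ 2) * (1 / 25) :=
    scale_pointwise hγf hγne hSf hSne
  simp only [this]
  rw [integral_mul_const, distortion_eq P hγf hγne]
  ring

lemma J_disjoint : ∀ i j : Fin 3, i ≠ j → Disjoint (J i) (J j) := by
  have key : ∀ i j : Fin 3, (i : ℕ) < (j : ℕ) → Disjoint (J i) (J j) := by
    intro i j hij
    rw [J_eq, J_eq]
    have h1 : (i : ℝ) + 1 ≤ (j : ℝ) := by exact_mod_cast hij
    rw [Set.disjoint_left]
    rintro x ⟨hx1, hx2⟩ ⟨hx3, hx4⟩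
    linarith
  intro i j hij
  rcases lt_or_gt_of_ne (fun h : (i:ℕ) = (j:ℕ) => hij (Fin.ext h)) with h | h
  · exact key i j h
  · exact (key j i h).symm

lemma cover {x : ℝ} (hx : x ∈ Icc (0:ℝ) 1)
    (hg : x ∉ Set.Ioo (1/5 : ℝ) (2/5) ∪ Set.Ioo (3/5 : ℝ) (4/5)) :
    x ∈ J 0 ∪ J 1 ∪ J 2 := by
  simp only [Set.mem_union, Set.mem_Ioo, not_or, not_and_or, not_lt] at hg
  obtain ⟨hx0, hx1⟩ := hx
  simp only [Set.mem_union, J_eq, Set.mem_Icc]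
  have e0 : (2 * ((0 : Fin 3) : ℝ) / 5 : ℝ) = 0 := by norm_num
  have e1 : (2 * ((1 : Fin 3) : ℝ) / 5 : ℝ) = 2/5 := by norm_num
  have e2 : (2 * ((2 : Fin 3) : ℝ) / 5 : ℝ) = 4/5 := by norm_num
  rw [e0, e1, e2]
  rcases le_or_gt x (1/5) with h | h
  · exact Or.inl (Or.inl ⟨hx0, by linarith⟩)
  rcases hg.1 with h' | h'
  · linarith
  rcases le_or_gt x (3/5) with h2 | h2
  · exact Or.inl (Or.inr ⟨by linarith, by linarith⟩)
  rcases hg.2 with h'' | h''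
  · linarith
  · exact Or.inr ⟨by linarith, by linarith⟩


end Aux13

theorem stmt13 (P : Measure ℝ) [IsProbabilityMeasure P] (hP : IsTriadicCantor P)
    (n : ℕ) (hn : 3 ≤ n) (α : Set ℝ) (hfin : α.Finite) (hne : α.Nonempty)
    (hcard : α.ncard ≤ n) (hopt : distortion P α = quantErr P n)
    (hint : ∀ j : Fin 3, (α ∩ J j).Nonempty)
    (hgap : ∀ x ∈ α, x ∉ Set.Ioo (1 / 5 : ℝ) (2 / 5) ∪ Set.Ioo (3 / 5 : ℝ) (4 / 5))
    (hvor : ∀ j : Fin 3, ∀ a ∈ α ∩ J j, ∀ i : Fin 3, i ≠ j →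
      ∀ x ∈ {x : ℝ | |x - a| = ⨅ b : α, |x - (b : ℝ)|}, x ∉ J i) :
    (∀ j : Fin 3,
      (S j ⁻¹' (α ∩ J j)).Finite ∧ (S j ⁻¹' (α ∩ J j)).Nonempty ∧
      (S j ⁻¹' (α ∩ J j)).ncard ≤ (α ∩ J j).ncard ∧
      distortion P (S j ⁻¹' (α ∩ J j)) = quantErr P ((α ∩ J j).ncard)) ∧
    quantErr P n = (1 / 75) *
      (quantErr P ((α ∩ J 0).ncard) + quantErr P ((α ∩ J 1).ncard) +
        quantErr P ((α ∩ J 2).ncard)) := by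
  have hP' : P = (3 : ℝ≥0∞)⁻¹ • (P.map (S 0) + P.map (S 1) + P.map (S 2)) := hP
  have hAne' : hfin.toFinset.Nonempty := by simpa using hne
  have hFcont : Continuous fun x => (hfin.toFinset.inf' hAne' fun a => (x - a) ^ 2) :=
    Aux13.continuous_inf' _ _ _ (fun a => by fun_prop)
  -- α ∩ [0,1]
  have hINTf : (α ∩ Set.Icc 0 1).Finite := hfin.inter_of_left _
  have hINTne : (α ∩ Set.Icc 0 1).Nonempty :=
    (hint 0).mono (Set.inter_subset_inter_right α (Aux13.J_subset 0))
  have hINTne' : hINTf.toFinset.Nonempty := by simpa using hINTne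
  have hF0cont : Continuous fun x => (hINTf.toFinset.inf' hINTne' fun a => (x - a) ^ 2) :=
    Aux13.continuous_inf' _ _ _ (fun a => by fun_prop)
  have hsubINT : hINTf.toFinset ⊆ hfin.toFinset := by
    intro a ha; simp only [Set.Finite.mem_toFinset] at ha ⊢; exact ha.1
  have hFle : ∀ x : ℝ, (hfin.toFinset.inf' hAne' fun a => (x - a) ^ 2) ≤ (hINTf.toFinset.inf' hINTne' fun a => (x - a) ^ 2) := fun x =>
    Aux13.inf'_subset hsubINT hINTne' _
  -- the exceptional set E
  have hEmeas : MeasurableSet (Set.Icc (0:ℝ) 1 ∩ {x : ℝ | (hfin.toFinset.inf' hAne' fun a => (x - a) ^ 2) < (hINTf.toFinset.inf' hINTne' fun a => (x - a) ^ 2)}) :=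
    measurableSet_Icc.inter (measurableSet_lt hFcont.measurable hF0cont.measurable)
  have hE0 : P (Set.Icc (0:ℝ) 1 ∩ {x : ℝ | (hfin.toFinset.inf' hAne' fun a => (x - a) ^ 2) < (hINTf.toFinset.inf' hINTne' fun a => (x - a) ^ 2)}) = 0 := by
    by_contra hEne
    have hPE : 0 < P (Set.Icc (0:ℝ) 1 ∩ {x : ℝ | (hfin.toFinset.inf' hAne' fun a => (x - a) ^ 2) < (hINTf.toFinset.inf' hINTne' fun a => (x - a) ^ 2)}) :=
      pos_iff_ne_zero.2 hEne
    have himf : (Aux13.clamp '' α).Finite := hfin.image _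
    have himne : (Aux13.clamp '' α).Nonempty := hne.image _
    have himne' : himf.toFinset.Nonempty := by simpa using himne
    have hG'cont : Continuous fun x => (himf.toFinset.inf' himne' fun a => (x - a) ^ 2) :=
      Aux13.continuous_inf' _ _ _ (fun a => by fun_prop)
    have hle : ∀ x ∈ Set.Icc (0:ℝ) 1,
        (himf.toFinset.inf' himne' fun a => (x - a) ^ 2) ≤ (hfin.toFinset.inf' hAne' fun a => (x - a) ^ 2) := by
      intro x hx
      obtain ⟨b, hb, hbe⟩ := Finset.exists_mem_eq_inf' hAne' (fun a => (x - a) ^ 2)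
      rw [hbe]
      have hmem : Aux13.clamp b ∈ himf.toFinset := by
        simp only [Set.Finite.mem_toFinset]
        exact ⟨b, by simpa using hb, rfl⟩
      exact (Finset.inf'_le _ hmem).trans (Aux13.clamp_sq_le hx)
    have hlt : ∀ x ∈ Set.Icc (0:ℝ) 1 ∩ {x : ℝ | (hfin.toFinset.inf' hAne' fun a => (x - a) ^ 2) < (hINTf.toFinset.inf' hINTne' fun a => (x - a) ^ 2)},
        (himf.toFinset.inf' himne' fun a => (x - a) ^ 2) < (hfin.toFinset.inf' hAne' fun a => (x - a) ^ 2) := by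
      rintro x ⟨hxI, hxlt⟩
      obtain ⟨b, hb, hbe⟩ := Finset.exists_mem_eq_inf' hAne' (fun a => (x - a) ^ 2)
      have hbα : b ∈ α := by simpa using hb
      have hbnot : b ∉ Set.Icc (0:ℝ) 1 := by
        intro hbI
        have hbA0 : b ∈ hINTf.toFinset := by
          simp only [Set.Finite.mem_toFinset]; exact ⟨hbα, hbI⟩
        have h2 := Finset.inf'_le (f := fun a => (x - a) ^ 2) (s := hINTf.toFinset) hbA0
        rw [← hbe] at h2
        exact absurd hxlt (not_lt.2 h2)
      have hmem : Aux13.clamp b ∈ himf.toFinset := by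
        simp only [Set.Finite.mem_toFinset]
        exact ⟨b, hbα, rfl⟩
      calc (himf.toFinset.inf' himne' fun a => (x - a) ^ 2)
          ≤ (x - Aux13.clamp b) ^ 2 := Finset.inf'_le _ hmem
        _ < (x - b) ^ 2 := Aux13.clamp_sq_lt hxI hbnot
        _ = _ := hbe.symm
    have hiF : Integrable (fun x => (hfin.toFinset.inf' hAne' fun a => (x - a) ^ 2)) P := Aux13.integrable_of_cont hP' _ hFcont
    have hiG : Integrable (fun x => himf.toFinset.inf' himne' fun a => (x - a) ^ 2) P :=
      Aux13.integrable_of_cont hP' _ hG'cont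
    have hpos : 0 < ∫ x, ((hfin.toFinset.inf' hAne' fun a => (x - a) ^ 2) - (himf.toFinset.inf' himne' fun a => (x - a) ^ 2)) ∂P := by
      rw [integral_pos_iff_support_of_nonneg_ae]
      · refine lt_of_lt_of_le hPE (measure_mono ?_)
        intro x hx
        exact sub_ne_zero.2 (hlt x hx).ne'
      · filter_upwards [Aux13.ae_unit hP'] with x hx
        exact sub_nonneg.2 (hle x hx)
      · exact hiF.sub hiG
    have hsubint : ∫ x, ((hfin.toFinset.inf' hAne' fun a => (x - a) ^ 2) - (himf.toFinset.inf' himne' fun a => (x - a) ^ 2)) ∂P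
        = (∫ x, (hfin.toFinset.inf' hAne' fun a => (x - a) ^ 2) ∂P) - ∫ x, (himf.toFinset.inf' himne' fun a => (x - a) ^ 2) ∂P :=
      integral_sub hiF hiG
    have hdc : distortion P (Aux13.clamp '' α)
        = ∫ x, (himf.toFinset.inf' himne' fun a => (x - a) ^ 2) ∂P := by
      rw [Aux13.distortion_eq P himf himne]
    have hda : distortion P α = ∫ x, (hfin.toFinset.inf' hAne' fun a => (x - a) ^ 2) ∂P := by
      rw [Aux13.distortion_eq P hfin hne]
    have hq := Aux13.quantErr_le P himf himne ((Set.ncard_image_le hfin).trans hcard)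
    rw [← hopt] at hq
    rw [hda, hdc] at hq
    linarith
  -- key pointwise identity on J j away from E
  have hβf : ∀ j : Fin 3, (α ∩ J j).Finite := fun j => hfin.inter_of_left _
  have hβne' : ∀ j : Fin 3, (hβf j).toFinset.Nonempty := fun j => by simpa using hint j
  have hptw : ∀ j : Fin 3, ∀ x : ℝ, x ∈ J j →
      x ∉ Set.Icc (0:ℝ) 1 ∩ {x : ℝ | (hfin.toFinset.inf' hAne' fun a => (x - a) ^ 2) < (hINTf.toFinset.inf' hINTne' fun a => (x - a) ^ 2)} →
      (hfin.toFinset.inf' hAne' fun a => (x - a) ^ 2) = (hβf j).toFinset.inf' (hβne' j) (fun a => (x - a) ^ 2) := by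
    intro j x hxJ hxE
    have hxI : x ∈ Set.Icc (0:ℝ) 1 := Aux13.J_subset j hxJ
    have hFeq : (hfin.toFinset.inf' hAne' fun a => (x - a) ^ 2) = (hINTf.toFinset.inf' hINTne' fun a => (x - a) ^ 2) := by
      refine le_antisymm (hFle x) ?_
      by_contra h
      exact hxE ⟨hxI, not_le.1 h⟩
    obtain ⟨a, ha, hae⟩ := Finset.exists_mem_eq_inf' hINTne' (fun b => (x - b) ^ 2)
    simp only [Set.Finite.mem_toFinset] at ha
    have haα : a ∈ α := ha.1
    have haI : a ∈ Set.Icc (0:ℝ) 1 := ha.2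
    have hvorx : |x - a| = ⨅ b : α, |x - (b : ℝ)| := by
      have hsq : (x - a) ^ 2 = (hfin.toFinset.inf' hAne' fun a => (x - a) ^ 2) := by rw [hFeq, hae]
      rw [Aux13.iInf_eq_inf' hfin hne (fun b => |x - b|) (fun b => abs_nonneg _)]
      have h2 : (hfin.toFinset.inf' hAne' fun a => (x - a) ^ 2) = (hfin.toFinset.inf' hAne' fun b => |x - b|) ^ 2 :=
        Aux13.inf'_sq_eq _ _ x
      have h3 := hsq.trans h2
      have h4 : (0:ℝ) ≤ |x - a| := abs_nonneg _
      have h5 : (0:ℝ) ≤ hfin.toFinset.inf' hAne' fun b => |x - b| :=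
        Aux13.inf'_nonneg _ _ (fun b => abs_nonneg _)
      have h6 : |x - a| ^ 2 = (hfin.toFinset.inf' hAne' fun b => |x - b|) ^ 2 := by
        rw [sq_abs]; exact h3
      nlinarith [h6, h4, h5]
    have haJ : a ∈ J j := by
      rcases Aux13.cover haI (hgap a haα) with (h | h) | h
      · by_cases hij : (0 : Fin 3) = j
        · rwa [← hij]
        · exact absurd hxJ (hvor 0 a ⟨haα, h⟩ j (fun hh => hij hh.symm) x hvorx)
      · by_cases hij : (1 : Fin 3) = j
        · rwa [← hij]
        · exact absurd hxJ (hvor 1 a ⟨haα, h⟩ j (fun hh => hij hh.symm) x hvorx)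
      · by_cases hij : (2 : Fin 3) = j
        · rwa [← hij]
        · exact absurd hxJ (hvor 2 a ⟨haα, h⟩ j (fun hh => hij hh.symm) x hvorx)
    have hBsub : (hβf j).toFinset ⊆ hfin.toFinset := by
      intro b hb; simp only [Set.Finite.mem_toFinset] at hb ⊢; exact hb.1
    have h1 : (hfin.toFinset.inf' hAne' fun a => (x - a) ^ 2) ≤ (hβf j).toFinset.inf' (hβne' j) (fun a => (x - a) ^ 2) :=
      Aux13.inf'_subset hBsub (hβne' j) _
    have h2 : (hβf j).toFinset.inf' (hβne' j) (fun b => (x - b) ^ 2) ≤ (x - a) ^ 2 :=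
      Finset.inf'_le _ (by simp only [Set.Finite.mem_toFinset]; exact ⟨haα, haJ⟩)
    have h3 : (x - a) ^ 2 = (hfin.toFinset.inf' hAne' fun a => (x - a) ^ 2) := by rw [hFeq, hae]
    linarith
  -- a.e. facts
  have haeE : ∀ j : Fin 3, ∀ᵐ y ∂P,
      S j y ∉ Set.Icc (0:ℝ) 1 ∩ {x : ℝ | (hfin.toFinset.inf' hAne' fun a => (x - a) ^ 2) < (hINTf.toFinset.inf' hINTne' fun a => (x - a) ^ 2)} := by
    intro j
    have h := Aux13.measure_eq hP' _ hEmeas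
    rw [hE0] at h
    have hsum : P (S 0 ⁻¹' (Set.Icc (0:ℝ) 1 ∩ {x : ℝ | (hfin.toFinset.inf' hAne' fun a => (x - a) ^ 2) < (hINTf.toFinset.inf' hINTne' fun a => (x - a) ^ 2)}))
        + P (S 1 ⁻¹' (Set.Icc (0:ℝ) 1 ∩ {x : ℝ | (hfin.toFinset.inf' hAne' fun a => (x - a) ^ 2) < (hINTf.toFinset.inf' hINTne' fun a => (x - a) ^ 2)}))
        + P (S 2 ⁻¹' (Set.Icc (0:ℝ) 1 ∩ {x : ℝ | (hfin.toFinset.inf' hAne' fun a => (x - a) ^ 2) < (hINTf.toFinset.inf' hINTne' fun a => (x - a) ^ 2)})) = 0 := by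
      rcases mul_eq_zero.1 h.symm with h' | h'
      · exact absurd h' (ENNReal.inv_ne_zero.2 (by norm_num))
      · exact h'
    have h0 := add_eq_zero.1 hsum
    have h00 := add_eq_zero.1 h0.1
    have hj : P (S j ⁻¹' (Set.Icc (0:ℝ) 1 ∩ {x : ℝ | (hfin.toFinset.inf' hAne' fun a => (x - a) ^ 2) < (hINTf.toFinset.inf' hINTne' fun a => (x - a) ^ 2)})) = 0 := by
      fin_cases j
      · exact h00.1
      · exact h00.2
      · exact h0.2
    rw [ae_iff]
    have hsetrw : {y : ℝ | ¬ S j y ∉ (Set.Icc (0:ℝ) 1 ∩ {x : ℝ | (hfin.toFinset.inf' hAne' fun a => (x - a) ^ 2) < (hINTf.toFinset.inf' hINTne' fun a => (x - a) ^ 2)})} = S j ⁻¹' (Set.Icc (0:ℝ) 1 ∩ {x : ℝ | (hfin.toFinset.inf' hAne' fun a => (x - a) ^ 2) < (hINTf.toFinset.inf' hINTne' fun a => (x - a) ^ 2)}) := by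
      ext y
      simp only [Set.mem_setOf_eq, not_not, Set.mem_preimage]
    rw [hsetrw]
    exact hj
  -- preimage facts
  have hpre : ∀ j : Fin 3, (S j ⁻¹' (α ∩ J j)).Finite := fun j =>
    Set.Finite.preimage (Aux13.S_inj j).injOn (hβf j)
  have himg : ∀ j : Fin 3, S j '' (S j ⁻¹' (α ∩ J j)) = α ∩ J j := fun j =>
    Set.image_preimage_eq _ (Aux13.S_surj j)
  have hprene : ∀ j : Fin 3, (S j ⁻¹' (α ∩ J j)).Nonempty := by
    intro j
    obtain ⟨a, ha⟩ := hint j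
    obtain ⟨z, hz⟩ := Aux13.S_surj j a
    exact ⟨z, by rw [Set.mem_preimage, hz]; exact ha⟩
  -- the per-piece integral identity
  have hDj : ∀ j : Fin 3, ∫ y, (fun x => (hfin.toFinset.inf' hAne' fun a => (x - a) ^ 2)) (S j y) ∂P
      = (1 / 25) * distortion P (S j ⁻¹' (α ∩ J j)) := by
    intro j
    have hSf : (S j '' (S j ⁻¹' (α ∩ J j))).Finite := by rw [himg j]; exact hβf j
    have hSne : (S j '' (S j ⁻¹' (α ∩ J j))).Nonempty := by rw [himg j]; exact hint j
    have hstep1 : ∫ y, (fun x => (hfin.toFinset.inf' hAne' fun a => (x - a) ^ 2)) (S j y) ∂P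
        = ∫ y, (hSf.toFinset.inf' (by simpa using hSne) fun a => (S j y - a) ^ 2) ∂P := by
      refine integral_congr_ae ?_
      filter_upwards [Aux13.ae_unit hP', haeE j] with y hy1 hy2
      have hxJ : S j y ∈ J j := Set.mem_image_of_mem _ hy1
      have := hptw j (S j y) hxJ hy2
      show (hfin.toFinset.inf' hAne' fun a => (S j y - a) ^ 2) = hSf.toFinset.inf' _ fun a => (S j y - a) ^ 2
      rw [this]
      have hfs : (hβf j).toFinset = hSf.toFinset := by
        ext b
        simp only [Set.Finite.mem_toFinset, himg j]
      simp only [hfs]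
    rw [hstep1]
    exact Aux13.scale_integral hP' j (hpre j) (hprene j) hSf hSne
  -- main identity
  have hmain : distortion P α = (1 / 75) * (distortion P (S 0 ⁻¹' (α ∩ J 0))
      + distortion P (S 1 ⁻¹' (α ∩ J 1)) + distortion P (S 2 ⁻¹' (α ∩ J 2))) := by
    rw [Aux13.distortion_eq P hfin hne]
    have hd := Aux13.integral_decomp hP' (fun x => (hfin.toFinset.inf' hAne' fun a => (x - a) ^ 2)) hFcont
    rw [hd, hDj 0, hDj 1, hDj 2]
    ring
  -- cardinalities
  have hcard_pre : ∀ j : Fin 3, (S j ⁻¹' (α ∩ J j)).ncard = (α ∩ J j).ncard := by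
    intro j
    conv_rhs => rw [← himg j]
    rw [Set.ncard_image_of_injective _ (Aux13.S_inj j)]
  have hd01 : Disjoint (α ∩ J 0) (α ∩ J 1) :=
    (Aux13.J_disjoint 0 1 (by decide)).mono Set.inter_subset_right Set.inter_subset_right
  have hd02 : Disjoint (α ∩ J 0) (α ∩ J 2) :=
    (Aux13.J_disjoint 0 2 (by decide)).mono Set.inter_subset_right Set.inter_subset_right
  have hd12 : Disjoint (α ∩ J 1) (α ∩ J 2) :=
    (Aux13.J_disjoint 1 2 (by decide)).mono Set.inter_subset_right Set.inter_subset_right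
  have hsumcard : (α ∩ J 0).ncard + (α ∩ J 1).ncard + (α ∩ J 2).ncard ≤ n := by
    have e1 : (α ∩ J 0).ncard + (α ∩ J 1).ncard = ((α ∩ J 0) ∪ (α ∩ J 1)).ncard :=
      (Set.ncard_union_eq hd01 (hβf 0) (hβf 1)).symm
    have e2 : ((α ∩ J 0) ∪ (α ∩ J 1)).ncard + (α ∩ J 2).ncard
        = (((α ∩ J 0) ∪ (α ∩ J 1)) ∪ (α ∩ J 2)).ncard :=
      (Set.ncard_union_eq (Set.disjoint_union_left.2 ⟨hd02, hd12⟩)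
        ((hβf 0).union (hβf 1)) (hβf 2)).symm
    have e3 : (((α ∩ J 0) ∪ (α ∩ J 1)) ∪ (α ∩ J 2)).ncard ≤ α.ncard :=
      Set.ncard_le_ncard (by
        apply Set.union_subset
        · exact Set.union_subset Set.inter_subset_left Set.inter_subset_left
        · exact Set.inter_subset_left) hfin
    omega
  have hβcard1 : ∀ j : Fin 3, 1 ≤ (α ∩ J j).ncard := fun j =>
    (Set.ncard_pos (hβf j)).2 (hint j)
  -- upper bound for quantErr P n
  have hVle : quantErr P n ≤ (1 / 75) * (quantErr P ((α ∩ J 0).ncard)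
      + quantErr P ((α ∩ J 1).ncard) + quantErr P ((α ∩ J 2).ncard)) := by
    refine le_of_forall_pos_le_add fun ε hε => ?_
    have hex : ∀ j : Fin 3, ∃ γ : Set ℝ, γ.Finite ∧ γ.Nonempty ∧
        γ.ncard ≤ (α ∩ J j).ncard ∧
        distortion P γ < quantErr P ((α ∩ J j).ncard) + 25 * ε := fun j =>
      Aux13.exists_near P (hβcard1 j) (by linarith)
    choose γ hγf hγne hγc hγlt using hex
    have hα'f : (S 0 '' γ 0 ∪ S 1 '' γ 1 ∪ S 2 '' γ 2).Finite :=
      (((hγf 0).image _).union ((hγf 1).image _)).union ((hγf 2).image _)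
    have hα'ne : (S 0 '' γ 0 ∪ S 1 '' γ 1 ∪ S 2 '' γ 2).Nonempty := by
      obtain ⟨z, hz⟩ := hγne 0
      exact ⟨S 0 z, Or.inl (Or.inl ⟨z, hz, rfl⟩)⟩
    have hα'ne' : hα'f.toFinset.Nonempty := by simpa using hα'ne
    have hα'card : (S 0 '' γ 0 ∪ S 1 '' γ 1 ∪ S 2 '' γ 2).ncard ≤ n := by
      have u1 := Set.ncard_union_le (S 0 '' γ 0 ∪ S 1 '' γ 1) (S 2 '' γ 2)
      have u2 := Set.ncard_union_le (S 0 '' γ 0) (S 1 '' γ 1)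
      have i0 : (S 0 '' γ 0).ncard ≤ (α ∩ J 0).ncard := by
        rw [Set.ncard_image_of_injective _ (Aux13.S_inj 0)]; exact hγc 0
      have i1 : (S 1 '' γ 1).ncard ≤ (α ∩ J 1).ncard := by
        rw [Set.ncard_image_of_injective _ (Aux13.S_inj 1)]; exact hγc 1
      have i2 : (S 2 '' γ 2).ncard ≤ (α ∩ J 2).ncard := by
        rw [Set.ncard_image_of_injective _ (Aux13.S_inj 2)]; exact hγc 2
      omega
    have h1 := Aux13.quantErr_le P hα'f hα'ne hα'card
    have hGc : Continuous fun x => (hα'f.toFinset.inf' hα'ne' fun a => (x - a) ^ 2) :=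
      Aux13.continuous_inf' _ _ _ (fun a => by fun_prop)
    have hdec : distortion P (S 0 '' γ 0 ∪ S 1 '' γ 1 ∪ S 2 '' γ 2)
        = (1/3) * ((∫ y, (fun x => hα'f.toFinset.inf' hα'ne' fun a => (x - a) ^ 2) (S 0 y) ∂P)
          + (∫ y, (fun x => hα'f.toFinset.inf' hα'ne' fun a => (x - a) ^ 2) (S 1 y) ∂P)
          + ∫ y, (fun x => hα'f.toFinset.inf' hα'ne' fun a => (x - a) ^ 2) (S 2 y) ∂P) := by
      rw [Aux13.distortion_eq P hα'f hα'ne]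
      exact Aux13.integral_decomp hP' _ hGc
    have hbound : ∀ j : Fin 3,
        (∫ y, (fun x => hα'f.toFinset.inf' hα'ne' fun a => (x - a) ^ 2) (S j y) ∂P)
          ≤ (1 / 25) * distortion P (γ j) := by
      intro j
      have hSjf : (S j '' γ j).Finite := (hγf j).image _
      have hSjne : (S j '' γ j).Nonempty := (hγne j).image _
      have hSjne' : hSjf.toFinset.Nonempty := by simpa using hSjne
      have hsub : hSjf.toFinset ⊆ hα'f.toFinset := by
        intro b hb
        simp only [Set.Finite.mem_toFinset] at hb ⊢
        fin_cases j
        · exact Or.inl (Or.inl hb)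
        · exact Or.inl (Or.inr hb)
        · exact Or.inr hb
      have hSjc : Continuous fun x => (hSjf.toFinset.inf' hSjne' fun a => (x - a) ^ 2) :=
        Aux13.continuous_inf' _ _ _ (fun a => by fun_prop)
      have hmono := integral_mono
        (Aux13.integrable_of_cont hP' _ (hGc.comp (Aux13.S_cont j)))
        (Aux13.integrable_of_cont hP' _ (hSjc.comp (Aux13.S_cont j)))
        (fun y => Aux13.inf'_subset hsub hSjne' (fun a => (S j y - a) ^ 2))
      refine hmono.trans ?_
      exact le_of_eq (Aux13.scale_integral hP' j (hγf j) (hγne j) hSjf hSjne)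
    have hfin3 : distortion P (S 0 '' γ 0 ∪ S 1 '' γ 1 ∪ S 2 '' γ 2)
        ≤ (1 / 75) * (quantErr P ((α ∩ J 0).ncard) + quantErr P ((α ∩ J 1).ncard)
          + quantErr P ((α ∩ J 2).ncard)) + ε := by
      rw [hdec]
      have b0 := hbound 0
      have b1 := hbound 1
      have b2 := hbound 2
      have l0 := hγlt 0
      have l1 := hγlt 1
      have l2 := hγlt 2
      linarith
    linarith
  -- lower bounds per piece
  have hDge : ∀ j : Fin 3,
      quantErr P ((α ∩ J j).ncard) ≤ distortion P (S j ⁻¹' (α ∩ J j)) := fun j =>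
    Aux13.quantErr_le P (hpre j) (hprene j) (hcard_pre j).le
  have hVn : quantErr P n = (1 / 75) * (distortion P (S 0 ⁻¹' (α ∩ J 0))
      + distortion P (S 1 ⁻¹' (α ∩ J 1)) + distortion P (S 2 ⁻¹' (α ∩ J 2))) := by
    rw [← hopt]; exact hmain
  have hg0 := hDge 0
  have hg1 := hDge 1
  have hg2 := hDge 2
  have hD0 : distortion P (S 0 ⁻¹' (α ∩ J 0)) = quantErr P ((α ∩ J 0).ncard) := by
    linarith
  have hD1 : distortion P (S 1 ⁻¹' (α ∩ J 1)) = quantErr P ((α ∩ J 1).ncard) := by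
    linarith
  have hD2 : distortion P (S 2 ⁻¹' (α ∩ J 2)) = quantErr P ((α ∩ J 2).ncard) := by
    linarith
  refine ⟨fun j => ⟨hpre j, hprene j, (hcard_pre j).le, ?_⟩, ?_⟩
  · fin_cases j
    · exact hD0
    · exact hD1
    · exact hD2
  · rw [hVn, hD0, hD1, hD2]
end
end

section
/- Let β = log 3 / log 5 and define f : [1,2] → ℝ by f(x) = (1/28125)(5429 − 2304 x) x^{2/β}. Let x₀ = 5429 / (1152(β + 2)). Then: (i) 1 < x₀ < 2; (ii) f(x₀) > f(2) > f(1) and f(1) = 1/9; and (iii) the image f([1,2]) equals the closed interval [f(1), f(x₀)]. -/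
open MeasureTheory Filter
open scoped ENNReal

noncomputable section

private lemma aux16 (β : ℝ) (hβ1 : 1/2 < β) (hβ2 : β < 1) :
    (1 < 5429 / (1152 * (β + 2)) ∧ 5429 / (1152 * (β + 2)) < 2) ∧
    ((fun x : ℝ => (1 / 28125) * (5429 - 2304 * x) * x ^ (2 / β))
        (5429 / (1152 * (β + 2))) >
      (fun x : ℝ => (1 / 28125) * (5429 - 2304 * x) * x ^ (2 / β)) 2 ∧
      (fun x : ℝ => (1 / 28125) * (5429 - 2304 * x) * x ^ (2 / β)) 2 >
      (fun x : ℝ => (1 / 28125) * (5429 - 2304 * x) * x ^ (2 / β)) 1 ∧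
      (fun x : ℝ => (1 / 28125) * (5429 - 2304 * x) * x ^ (2 / β)) 1 = 1 / 9) ∧
    (fun x : ℝ => (1 / 28125) * (5429 - 2304 * x) * x ^ (2 / β)) '' Set.Icc 1 2
      = Set.Icc
          ((fun x : ℝ => (1 / 28125) * (5429 - 2304 * x) * x ^ (2 / β)) 1)
          ((fun x : ℝ => (1 / 28125) * (5429 - 2304 * x) * x ^ (2 / β))
            (5429 / (1152 * (β + 2)))) := by
  have hβ0 : 0 < β := by linarith
  set γ : ℝ := 2 / β with hγdef
  set f : ℝ → ℝ := fun x : ℝ => (1 / 28125) * (5429 - 2304 * x) * x ^ γ with hfdef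
  set x₀ : ℝ := 5429 / (1152 * (β + 2)) with hx₀def
  have hγ2 : 2 < γ := by
    rw [hγdef, lt_div_iff₀ hβ0]; linarith
  have hγ4 : γ < 4 := by
    rw [hγdef, div_lt_iff₀ hβ0]; linarith
  -- x₀ bounds
  have hden : 0 < 1152 * (β + 2) := by linarith
  have hx₀1 : 1 < x₀ := by
    rw [hx₀def, lt_div_iff₀ hden]; linarith
  have hx₀2 : x₀ < 2 := by
    rw [hx₀def, div_lt_iff₀ hden]; linarith
  -- critical point identity
  have hx₀eq : x₀ = 5429 * γ / (2304 * (γ + 1)) := by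
    rw [hx₀def, hγdef]
    rw [div_eq_div_iff hden.ne' (by positivity)]
    field_simp
    ring
  -- derivative
  have hderiv : ∀ x : ℝ, 0 < x →
      HasDerivAt f ((1/28125) * (x ^ (γ - 1) * (5429 * γ - 2304 * (γ + 1) * x))) x := by
    intro x hx
    have h1 : HasDerivAt (fun y : ℝ => y ^ γ) (γ * x ^ (γ - 1)) x :=
      Real.hasDerivAt_rpow_const (Or.inl hx.ne')
    have h2 : HasDerivAt (fun y : ℝ => (1/28125 : ℝ) * (5429 - 2304 * y))
        ((1/28125 : ℝ) * -(2304 * 1)) x :=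
      (((hasDerivAt_id x).const_mul (2304:ℝ)).const_sub 5429).const_mul _
    have h := h2.mul h1
    have hxγ : x ^ γ = x ^ (γ - 1) * x := by
      rw [← Real.rpow_add_one hx.ne']; ring_nf
    refine h.congr_deriv ?_
    rw [hxγ]; ring
  -- continuity on [1,2]
  have hcont : ContinuousOn f (Set.Icc (1:ℝ) 2) := by
    apply ContinuousOn.mul
    · fun_prop
    · intro x hx
      exact (Real.continuousAt_rpow_const x γ
        (Or.inl (show (0:ℝ) < x by linarith [hx.1]).ne')).continuousWithinAt
  have hcont1 : ContinuousOn f (Set.Icc (1:ℝ) x₀) :=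
    hcont.mono (Set.Icc_subset_Icc le_rfl hx₀2.le)
  have hcont2 : ContinuousOn f (Set.Icc x₀ 2) :=
    hcont.mono (Set.Icc_subset_Icc hx₀1.le le_rfl)
  have hfactor : 0 < 2304 * (γ + 1) := by linarith
  -- strict monotonicity on [1, x₀]
  have hmono : StrictMonoOn f (Set.Icc (1:ℝ) x₀) := by
    apply strictMonoOn_of_deriv_pos (convex_Icc _ _) hcont1
    intro x hx
    rw [interior_Icc] at hx
    have hx0 : 0 < x := by linarith [hx.1]
    rw [(hderiv x hx0).deriv]
    have h1 : 0 < x ^ (γ - 1) := Real.rpow_pos_of_pos hx0 _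
    have h2 : 0 < 5429 * γ - 2304 * (γ + 1) * x := by
      have := hx.2
      rw [hx₀eq, lt_div_iff₀ hfactor] at this
      linarith
    positivity
  -- strict antitonicity on [x₀, 2]
  have hanti : StrictAntiOn f (Set.Icc x₀ 2) := by
    apply strictAntiOn_of_deriv_neg (convex_Icc _ _) hcont2
    intro x hx
    rw [interior_Icc] at hx
    have hx0 : 0 < x := by linarith [hx.1]
    rw [(hderiv x hx0).deriv]
    have h1 : 0 < x ^ (γ - 1) := Real.rpow_pos_of_pos hx0 _
    have h2 : 5429 * γ - 2304 * (γ + 1) * x < 0 := by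
      have := hx.1
      rw [hx₀eq, div_lt_iff₀ hfactor] at this
      linarith
    have : (1/28125 : ℝ) * (x ^ (γ - 1) * (5429 * γ - 2304 * (γ + 1) * x)) < 0 := by
      apply mul_neg_of_pos_of_neg (by norm_num)
      exact mul_neg_of_pos_of_neg h1 h2
    exact this
  -- values
  have hf1 : f 1 = 1 / 9 := by
    simp only [hfdef, Real.one_rpow]
    norm_num
  have hf21 : f 1 < f 2 := by
    have h4 : (4:ℝ) ≤ (2:ℝ) ^ γ := by
      have : (2:ℝ) ^ (2:ℝ) ≤ (2:ℝ) ^ γ :=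
        Real.rpow_le_rpow_of_exponent_le (by norm_num) hγ2.le
      have h22 : (2:ℝ) ^ (2:ℝ) = 4 := by
        rw [show (2:ℝ) = ((2:ℕ):ℝ) from by norm_num, Real.rpow_natCast]; norm_num
      linarith
    have : f 2 = (821 / 28125) * (2:ℝ) ^ γ := by
      simp only [hfdef]; ring
    rw [this, hf1]
    nlinarith
  have hx₀mem : x₀ ∈ Set.Icc (1:ℝ) 2 := ⟨hx₀1.le, hx₀2.le⟩
  have hfx₀2 : f 2 < f x₀ :=
    hanti (Set.left_mem_Icc.mpr hx₀2.le) (Set.right_mem_Icc.mpr hx₀2.le) hx₀2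
  -- bounds on [1,2]
  have hub : ∀ x ∈ Set.Icc (1:ℝ) 2, f x ≤ f x₀ := by
    intro x hx
    rcases le_total x x₀ with h | h
    · exact hmono.monotoneOn ⟨hx.1, h⟩ (Set.right_mem_Icc.mpr (by linarith [hx.1])) h
    · exact hanti.antitoneOn (Set.left_mem_Icc.mpr (by linarith [hx.2])) ⟨h, hx.2⟩ h
  have hlb : ∀ x ∈ Set.Icc (1:ℝ) 2, f 1 ≤ f x := by
    intro x hx
    rcases le_total x x₀ with h | h
    · exact hmono.monotoneOn (Set.left_mem_Icc.mpr (by linarith [hx.1])) ⟨hx.1, h⟩ hx.1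
    · have : f 2 ≤ f x :=
        hanti.antitoneOn ⟨h, hx.2⟩ (Set.right_mem_Icc.mpr (by linarith [hx.1])) hx.2
      linarith
  -- image
  have himg : f '' Set.Icc 1 2 = Set.Icc (f 1) (f x₀) := by
    apply Set.Subset.antisymm
    · rintro _ ⟨x, hx, rfl⟩
      exact ⟨hlb x hx, hub x hx⟩
    · have h1 : Set.Icc (f 1) (f x₀) ⊆ f '' Set.Icc 1 x₀ :=
        intermediate_value_Icc hx₀1.le hcont1
      refine h1.trans (Set.image_mono ?_)
      exact Set.Icc_subset_Icc le_rfl hx₀2.le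
  refine ⟨⟨hx₀1, hx₀2⟩, ⟨?_, ?_, ?_⟩, ?_⟩
  · exact hfx₀2
  · exact hf21
  · exact hf1
  · exact himg

private lemma beta_half : (1:ℝ)/2 < Real.log 3 / Real.log 5 := by
  rw [div_lt_div_iff₀ (by norm_num) (Real.log_pos (by norm_num))]
  have h : Real.log 5 < Real.log 9 := Real.log_lt_log (by norm_num) (by norm_num)
  have h9 : Real.log 9 = 2 * Real.log 3 := by
    rw [show (9:ℝ) = 3 ^ (2:ℕ) by norm_num, Real.log_pow]; push_cast; ring
  linarith

private lemma beta_one : Real.log 3 / Real.log 5 < 1 :=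
  (div_lt_one (Real.log_pos (by norm_num))).mpr
    (Real.log_lt_log (by norm_num) (by norm_num))

theorem stmt16 :
    (1 < 5429 / (1152 * (Real.log 3 / Real.log 5 + 2)) ∧
      5429 / (1152 * (Real.log 3 / Real.log 5 + 2)) < 2) ∧
    ((fun x : ℝ => (1 / 28125) * (5429 - 2304 * x) * x ^ (2 / (Real.log 3 / Real.log 5)))
        (5429 / (1152 * (Real.log 3 / Real.log 5 + 2))) >
      (fun x : ℝ => (1 / 28125) * (5429 - 2304 * x) * x ^ (2 / (Real.log 3 / Real.log 5))) 2 ∧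
      (fun x : ℝ => (1 / 28125) * (5429 - 2304 * x) * x ^ (2 / (Real.log 3 / Real.log 5))) 2 >
      (fun x : ℝ => (1 / 28125) * (5429 - 2304 * x) * x ^ (2 / (Real.log 3 / Real.log 5))) 1 ∧
      (fun x : ℝ => (1 / 28125) * (5429 - 2304 * x) * x ^ (2 / (Real.log 3 / Real.log 5))) 1
        = 1 / 9) ∧
    (fun x : ℝ => (1 / 28125) * (5429 - 2304 * x) * x ^ (2 / (Real.log 3 / Real.log 5))) ''
        Set.Icc 1 2
      = Set.Icc
          ((fun x : ℝ => (1 / 28125) * (5429 - 2304 * x) *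
              x ^ (2 / (Real.log 3 / Real.log 5))) 1)
          ((fun x : ℝ => (1 / 28125) * (5429 - 2304 * x) *
              x ^ (2 / (Real.log 3 / Real.log 5)))
            (5429 / (1152 * (Real.log 3 / Real.log 5 + 2)))) :=
  aux16 _ beta_half beta_one
end
end
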